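/- Let 1 < m < 2 and ν > 0. Define p : ℝ → ℝ by p(x) = p₀ [1 − tanh²( ((2−m)/(2(m−1))) x )]^{(m−1)/(2−m)} with p₀ = (mν/(2(m−1)))^{(m−1)/(2−m)}. Then p is positive, even, continuously differentiable, tends to 0 as |x| → ∞, and satisfies the first-integral equation (1/2) p(x)² − (1/2) p'(x)² = ((m−1)/(mν)) p(x)^{m/(m−1)} for all x ∈ ℝ. Consequently ρ_∞ := p^{1/(m−1)}, i.e. ρ_∞(x) = (mν/(2(m−1)))^{1/(2−m)} [1 − tanh²( ((2−m)/(2(m−1))) x )]^{1/(2−m)}, with ρ_∞(0) = (mν/(2(m−1)))^{1/(2−m)}. -/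

import Mathlib

open Set Filter Real

private lemma my_hasDerivAt_tanh (x : ℝ) :
    HasDerivAt Real.tanh (1 - Real.tanh x ^ 2) x := by
  have hc : Real.cosh x ≠ 0 := (Real.cosh_pos x).ne'
  have h := (Real.hasDerivAt_sinh x).div (Real.hasDerivAt_cosh x) hc
  have hfun : (fun y => Real.sinh y / Real.cosh y) = Real.tanh := by
    funext y; rw [Real.tanh_eq_sinh_div_cosh]
  change HasDerivAt (fun y => Real.sinh y / Real.cosh y) _ x at h
  rw [hfun] at h
  convert h using 1
  rw [Real.tanh_eq_sinh_div_cosh]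
  field_simp

private lemma my_one_sub_tanh_sq (x : ℝ) :
    1 - Real.tanh x ^ 2 = (Real.cosh x ^ 2)⁻¹ := by
  have hc : Real.cosh x ≠ 0 := (Real.cosh_pos x).ne'
  rw [Real.tanh_eq_sinh_div_cosh]
  field_simp
  linarith [Real.cosh_sq_sub_sinh_sq x]

private lemma my_one_sub_tanh_sq_pos (x : ℝ) : 0 < 1 - Real.tanh x ^ 2 := by
  rw [my_one_sub_tanh_sq]
  positivity

private lemma my_contDiff_tanh : ContDiff ℝ 1 Real.tanh := by
  have hfun : (fun y => Real.sinh y / Real.cosh y) = Real.tanh := by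
    funext y; rw [Real.tanh_eq_sinh_div_cosh]
  rw [← hfun]
  exact Real.contDiff_sinh.div Real.contDiff_cosh fun y => (Real.cosh_pos y).ne'

private lemma my_tendsto_cosh_atTop : Tendsto Real.cosh atTop atTop := by
  apply tendsto_atTop_mono (f := fun x => Real.exp x / 2)
  · intro x
    rw [Real.cosh_eq]
    have := Real.exp_pos (-x)
    linarith
  · exact Real.tendsto_exp_atTop.atTop_div_const two_pos

/-- The explicit limiting profile `p(x) = p₀ [1 − tanh²(((2−m)/(2(m−1))) x)]^{(m−1)/(2−m)}`
with `p₀ = (mν/(2(m−1)))^{(m−1)/(2−m)}`, for the Bessel kernel in the regime `1 < m < 2`. -/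
noncomputable def besselP (m ν x : ℝ) : ℝ :=
  (m * ν / (2 * (m - 1))) ^ ((m - 1) / (2 - m)) *
    (1 - Real.tanh ((2 - m) / (2 * (m - 1)) * x) ^ 2) ^ ((m - 1) / (2 - m))

/-- For `1 < m < 2` and `ν > 0`, the explicit profile `p = besselP m ν` is positive,
even, `C¹`, decays to `0` at infinity, and satisfies the first-integral equation
`(1/2)p² − (1/2)p'² = ((m−1)/(mν)) p^{m/(m−1)}`; consequently
`ρ_∞ = p^{1/(m−1)}` is given by the stated explicit formula, with
`ρ_∞(0) = (mν/(2(m−1)))^{1/(2−m)}`. -/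
theorem bessel_limiting_profile
    (m ν : ℝ) (hm1 : 1 < m) (hm2 : m < 2) (hν : 0 < ν) :
    (∀ x, 0 < besselP m ν x) ∧
    (∀ x, besselP m ν (-x) = besselP m ν x) ∧
    ContDiff ℝ 1 (besselP m ν) ∧
    Tendsto (besselP m ν) atTop (nhds 0) ∧
    Tendsto (besselP m ν) atBot (nhds 0) ∧
    (∀ x, (1 / 2) * besselP m ν x ^ 2 - (1 / 2) * deriv (besselP m ν) x ^ 2
        = ((m - 1) / (m * ν)) * besselP m ν x ^ (m / (m - 1))) ∧
    (∀ x, besselP m ν x ^ (1 / (m - 1)) =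
        (m * ν / (2 * (m - 1))) ^ (1 / (2 - m)) *
          (1 - Real.tanh ((2 - m) / (2 * (m - 1)) * x) ^ 2) ^ (1 / (2 - m))) ∧
    besselP m ν 0 ^ (1 / (m - 1)) = (m * ν / (2 * (m - 1))) ^ (1 / (2 - m)) := by
  have hm1' : (0:ℝ) < m - 1 := by linarith
  have hm2' : (0:ℝ) < 2 - m := by linarith
  set K : ℝ := m * ν / (2 * (m - 1)) with hKdef
  set b : ℝ := (m - 1) / (2 - m) with hbdef
  set c : ℝ := (2 - m) / (2 * (m - 1)) with hcdef
  have hK : 0 < K := by rw [hKdef]; positivity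
  have hb : 0 < b := by rw [hbdef]; positivity
  have hc : 0 < c := by rw [hcdef]; positivity
  set u : ℝ → ℝ := fun x => 1 - Real.tanh (c * x) ^ 2 with hudef
  have hu : ∀ x, 0 < u x := fun x => my_one_sub_tanh_sq_pos (c * x)
  have hp : ∀ x, besselP m ν x = K ^ b * u x ^ b := fun x => rfl
  have hpfun : besselP m ν = fun x => K ^ b * u x ^ b := funext hp
  -- positivity
  have hpos : ∀ x, 0 < besselP m ν x := by
    intro x
    rw [hp]
    have := hu x
    positivity
  -- evenness
  have heven : ∀ x, besselP m ν (-x) = besselP m ν x := by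
    intro x
    rw [hp, hp]
    have : u (-x) = u x := by
      simp [hudef, mul_neg, Real.tanh_neg]
    rw [this]
  -- tendsto atTop
  have htop : Tendsto (besselP m ν) atTop (nhds 0) := by
    have hcosh2 : Tendsto (fun x => Real.cosh (c * x) ^ 2) atTop atTop := by
      refine (tendsto_pow_atTop two_ne_zero).comp ?_
      exact my_tendsto_cosh_atTop.comp (tendsto_id.const_mul_atTop hc)
    have hu0 : Tendsto u atTop (nhds 0) := by
      have huinv : u = fun x => (Real.cosh (c * x) ^ 2)⁻¹ := by
        funext x; exact my_one_sub_tanh_sq (c * x)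
      rw [huinv]
      exact tendsto_inv_atTop_zero.comp hcosh2
    have hrpow : Tendsto (fun t : ℝ => t ^ b) (nhds 0) (nhds 0) := by
      have h := (Real.continuousAt_rpow_const 0 b (Or.inr hb.le)).tendsto
      rwa [Real.zero_rpow hb.ne'] at h
    have h := (hrpow.comp hu0).const_mul (K ^ b)
    simp only [mul_zero] at h
    rw [hpfun]
    exact h
  -- derivative
  have hder : ∀ x, HasDerivAt (besselP m ν)
      (-Real.tanh (c * x) * besselP m ν x) x := by
    intro x
    set t : ℝ := Real.tanh (c * x) with htdef
    have hlin : HasDerivAt (fun y : ℝ => c * y) c x := by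
      simpa using (hasDerivAt_id x).const_mul c
    have h1 : HasDerivAt (fun y => Real.tanh (c * y)) ((1 - t ^ 2) * c) x :=
      (my_hasDerivAt_tanh (c * x)).comp x hlin
    have h2 : HasDerivAt u (-(2 * t ^ 1 * ((1 - t ^ 2) * c))) x := by
      have := (h1.pow 2).const_sub 1
      simpa using this
    have h3 : HasDerivAt (fun y => K ^ b * u y ^ b)
        (K ^ b * (-(2 * t ^ 1 * ((1 - t ^ 2) * c)) * b * u x ^ (b - 1))) x :=
      (h2.rpow_const (Or.inl (hu x).ne')).const_mul (K ^ b)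
    have hcb : 2 * c * b = 1 := by
      rw [hcdef, hbdef]; field_simp; try ring
    have hut : u x = 1 - t ^ 2 := rfl
    have hD : K ^ b * (-(2 * t ^ 1 * ((1 - t ^ 2) * c)) * b * u x ^ (b - 1))
        = -t * besselP m ν x := by
      rw [hp, Real.rpow_sub_one (hu x).ne', ← hut]
      have hUne : u x ≠ 0 := (hu x).ne'
      have hq : u x ^ b / u x * u x = u x ^ b := div_mul_cancel₀ _ hUne
      linear_combination (-(t * K ^ b * u x * (u x ^ b / u x))) * hcb - t * K ^ b * hq
    rw [← hD, hpfun]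
    exact h3
  have hderiv_eq : ∀ x, deriv (besselP m ν) x = -Real.tanh (c * x) * besselP m ν x :=
    fun x => (hder x).deriv
  refine ⟨hpos, heven, ?_, htop, ?_, ?_, ?_, ?_⟩
  -- C¹
  · have hu_cd : ContDiff ℝ 1 u := by
      apply contDiff_const.sub
      exact (my_contDiff_tanh.comp (contDiff_const.mul contDiff_id)).pow 2
    rw [hpfun]
    exact contDiff_const.mul (hu_cd.rpow_const_of_ne fun x => (hu x).ne')
  -- tendsto atBot
  · have h := htop.comp tendsto_neg_atBot_atTop
    exact h.congr fun x => heven x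
  -- first integral
  · intro x
    have key : 1 / 2 * besselP m ν x ^ 2 * u x
        = (m - 1) / (m * ν) * besselP m ν x ^ (m / (m - 1)) := by
      rw [hp]
      set U : ℝ := u x with hUdef
      have hU : 0 < U := hu x
      have e1 : (K ^ b * U ^ b) ^ 2 = K ^ (b + b) * U ^ (b + b) := by
        rw [mul_pow, sq, sq, ← Real.rpow_add hK, ← Real.rpow_add hU]
      have e2 : (K ^ b * U ^ b) ^ (m / (m - 1))
          = K ^ (b + b) * K * (U ^ (b + b) * U) := by
        rw [Real.mul_rpow (Real.rpow_nonneg hK.le _) (Real.rpow_nonneg hU.le _),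
          ← Real.rpow_mul hK.le, ← Real.rpow_mul hU.le]
        have hbe : b * (m / (m - 1)) = b + b + 1 := by
          rw [hbdef]; field_simp; try ring
        rw [hbe, Real.rpow_add hK, Real.rpow_add hU, Real.rpow_one, Real.rpow_one]
      rw [e1, e2]
      have hhalf : (m - 1) / (m * ν) * K = 1 / 2 := by
        rw [hKdef]; field_simp; try ring
      linear_combination (-(K ^ (b + b) * U ^ (b + b) * U)) * hhalf
    rw [hderiv_eq x]
    have hut : u x = 1 - Real.tanh (c * x) ^ 2 := rfl
    rw [hut] at key
    linear_combination key
  -- rho formula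
  · intro x
    have hux : (1 - Real.tanh (c * x) ^ 2) = u x := rfl
    rw [hux, hp,
      Real.mul_rpow (Real.rpow_nonneg hK.le _) (Real.rpow_nonneg (hu x).le _),
      ← Real.rpow_mul hK.le, ← Real.rpow_mul (hu x).le]
    have hbe : b * (1 / (m - 1)) = 1 / (2 - m) := by
      rw [hbdef]; field_simp; try ring
    rw [hbe]
  -- rho at 0
  · have hu0 : u 0 = 1 := by simp [hudef]
    rw [hp, hu0, Real.one_rpow, mul_one, ← Real.rpow_mul hK.le]
    have hbe : b * (1 / (m - 1)) = 1 / (2 - m) := by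
      rw [hbdef]; field_simp; try ring
    rw [hbe]
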